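/- If X_1, ..., X_m ∈ M_n(ℂ) are accretive-dissipative, then ω(X_1 X_2 ⋯ X_m) ≤ 2^{m/2} ∏_{j=1}^m ω(X_j). -/

import Mathlib

open Matrix Complex
open scoped ComplexOrder

/-- Hermitian real part `(X + Xᴴ)/2`. -/
noncomputable def reM {m : ℕ} (X : Matrix (Fin m) (Fin m) ℂ) : Matrix (Fin m) (Fin m) ℂ :=
  (1 / 2 : ℂ) • (X + Xᴴ)

/-- Hermitian imaginary part `(X - Xᴴ)/(2i)`. -/
noncomputable def imM {m : ℕ} (X : Matrix (Fin m) (Fin m) ℂ) : Matrix (Fin m) (Fin m) ℂ :=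
  (-Complex.I / 2) • (X - Xᴴ)

/-- Numerical range `W(X) = {⟨Xx, x⟩ : ‖x‖ = 1}`. -/
noncomputable def numRange {m : ℕ} (X : Matrix (Fin m) (Fin m) ℂ) : Set ℂ :=
  {z | ∃ x : EuclideanSpace ℂ (Fin m), ‖x‖ = 1 ∧ z = star (x : Fin m → ℂ) ⬝ᵥ X.mulVec x}

/-- Numerical radius `ω(X) = sup {|z| : z ∈ W(X)}`. -/
noncomputable def numRadius {m : ℕ} (X : Matrix (Fin m) (Fin m) ℂ) : ℝ :=
  sSup ((fun z : ℂ => ‖z‖) '' numRange X)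

/-- The sector `S_α`. -/
def sector (α : ℝ) : Set ℂ := {z : ℂ | 0 < z.re ∧ |z.im| ≤ Real.tan α * z.re}

/-- Operator norm of a matrix acting on Euclidean space. -/
noncomputable def opNorm {m : ℕ} (X : Matrix (Fin m) (Fin m) ℂ) : ℝ :=
  ‖Matrix.toEuclideanCLM (𝕜 := ℂ) X‖

section Aux

variable {n : ℕ}

private lemma conjTranspose_quad (X : Matrix (Fin n) (Fin n) ℂ) (x : Fin n → ℂ) :
    star x ⬝ᵥ Xᴴ.mulVec x = starRingEnd ℂ (star x ⬝ᵥ X.mulVec x) := by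
  simp only [dotProduct, mulVec, conjTranspose_apply, map_sum, _root_.map_mul, Pi.star_apply,
    RingHom.coe_coe, starRingEnd_apply, star_star, Finset.mul_sum]
  rw [Finset.sum_comm]
  congr 1; ext i; congr 1; ext j; simp [StarMul.star_mul]; ring

private lemma quad_reM (X : Matrix (Fin n) (Fin n) ℂ) (x : Fin n → ℂ) :
    star x ⬝ᵥ (reM X).mulVec x = (((star x ⬝ᵥ X.mulVec x).re : ℝ) : ℂ) := by
  simp only [reM, smul_mulVec, dotProduct_smul, add_mulVec, dotProduct_add,
    conjTranspose_quad, smul_eq_mul]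
  set z := star x ⬝ᵥ X.mulVec x
  rw [Complex.add_conj]
  push_cast
  ring

private lemma quad_imM (X : Matrix (Fin n) (Fin n) ℂ) (x : Fin n → ℂ) :
    star x ⬝ᵥ (imM X).mulVec x = (((star x ⬝ᵥ X.mulVec x).im : ℝ) : ℂ) := by
  simp only [imM, smul_mulVec, dotProduct_smul, sub_mulVec, dotProduct_sub,
    conjTranspose_quad, smul_eq_mul]
  set z := star x ⬝ᵥ X.mulVec x
  rw [Complex.sub_conj]
  have : Complex.I * Complex.I = -1 := Complex.I_mul_I
  field_simp
  ring_nf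
  rw [Complex.I_sq]
  push_cast
  ring

open scoped MatrixOrder in
private lemma psd_cs {A : Matrix (Fin n) (Fin n) ℂ} (hA : A.PosSemidef) (x y : Fin n → ℂ) :
    ‖star y ⬝ᵥ A.mulVec x‖ ≤
      Real.sqrt (star x ⬝ᵥ A.mulVec x).re * Real.sqrt (star y ⬝ᵥ A.mulVec y).re := by
  set S := CFC.sqrt A
  have hS : Sᴴ = S := (CFC.sqrt_nonneg A).posSemidef.1
  have hSS : S * S = A := CFC.sqrt_mul_sqrt_self A hA.nonneg
  have key : ∀ v w : Fin n → ℂ, star v ⬝ᵥ A.mulVec w =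
      inner ℂ (WithLp.toLp 2 (S.mulVec v)) (WithLp.toLp 2 (S.mulVec w)) := by
    intro v w
    rw [EuclideanSpace.inner_toLp_toLp, dotProduct_comm (S *ᵥ w), star_mulVec, hS, ← hSS, ← mulVec_mulVec,
      dotProduct_mulVec]
  have h1 := norm_inner_le_norm (𝕜 := ℂ) (WithLp.toLp 2 (S.mulVec y))
      (WithLp.toLp 2 (S.mulVec x))
  rw [← key] at h1
  have hx : ‖WithLp.toLp 2 (S.mulVec x)‖ =
      Real.sqrt (star x ⬝ᵥ A.mulVec x).re := by
    rw [@norm_eq_sqrt_re_inner ℂ, ← key]; simp [RCLike.re_to_complex]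
  have hy : ‖WithLp.toLp 2 (S.mulVec y)‖ =
      Real.sqrt (star y ⬝ᵥ A.mulVec y).re := by
    rw [@norm_eq_sqrt_re_inner ℂ, ← key]; simp [RCLike.re_to_complex]
  rw [hx, hy] at h1
  calc ‖star y ⬝ᵥ A.mulVec x‖ = ‖star y ⬝ᵥ A.mulVec x‖ := rfl
    _ ≤ _ := by rw [mul_comm]; exact h1

private lemma inner_clm (X : Matrix (Fin n) (Fin n) ℂ) (x y : EuclideanSpace ℂ (Fin n)) :
    (inner ℂ y (Matrix.toEuclideanCLM (𝕜 := ℂ) X x) : ℂ)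
      = star (y : Fin n → ℂ) ⬝ᵥ X.mulVec (x : Fin n → ℂ) := by
  rw [EuclideanSpace.inner_eq_star_dotProduct, ofLp_toEuclideanCLM]
  exact dotProduct_comm _ _

private lemma abs_le_opNorm (X : Matrix (Fin n) (Fin n) ℂ) :
    ∀ z ∈ (fun z : ℂ => ‖z‖) '' numRange X, z ≤ opNorm X := by
  rintro - ⟨-, ⟨x, hx, rfl⟩, rfl⟩
  rw [← inner_clm]
  calc ‖inner ℂ x (Matrix.toEuclideanCLM (𝕜 := ℂ) X x)‖
      = ‖(inner ℂ x (Matrix.toEuclideanCLM (𝕜 := ℂ) X x) : ℂ)‖ := rfl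
    _ ≤ ‖x‖ * ‖Matrix.toEuclideanCLM (𝕜 := ℂ) X x‖ := norm_inner_le_norm _ _
    _ ≤ ‖x‖ * (‖Matrix.toEuclideanCLM (𝕜 := ℂ) X‖ * ‖x‖) := by
        gcongr; exact ContinuousLinearMap.le_opNorm _ _
    _ = opNorm X := by rw [hx, opNorm]; ring

private lemma bddAbove_range (X : Matrix (Fin n) (Fin n) ℂ) :
    BddAbove ((fun z : ℂ => ‖z‖) '' numRange X) := ⟨opNorm X, abs_le_opNorm X⟩

private lemma abs_le_numRadius {X : Matrix (Fin n) (Fin n) ℂ} {x : EuclideanSpace ℂ (Fin n)}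
    (hx : ‖x‖ = 1) :
    ‖star (x : Fin n → ℂ) ⬝ᵥ X.mulVec (x : Fin n → ℂ)‖ ≤ numRadius X :=
  le_csSup (bddAbove_range X) ⟨_, ⟨x, hx, rfl⟩, rfl⟩

private lemma numRadius_nonneg (X : Matrix (Fin n) (Fin n) ℂ) : 0 ≤ numRadius X :=
  Real.sSup_nonneg (by rintro - ⟨-, -, rfl⟩; exact norm_nonneg _)

private lemma numRadius_le_opNorm (X : Matrix (Fin n) (Fin n) ℂ) :
    numRadius X ≤ opNorm X := by
  exact Real.sSup_le (abs_le_opNorm X) (norm_nonneg _)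

private lemma scalar_ineq {a b c d r1 r2 ω : ℝ} (ha : 0 ≤ a) (hb : 0 ≤ b) (hc : 0 ≤ c)
    (hd : 0 ≤ d) (hr1sq : r1 ^ 2 = a ^ 2 + b ^ 2) (hr2sq : r2 ^ 2 = c ^ 2 + d ^ 2)
    (hr1n : 0 ≤ r1) (hr2n : 0 ≤ r2) (hr1ω : r1 ≤ ω) (hr2ω : r2 ≤ ω) (hωn : 0 ≤ ω) :
    Real.sqrt a * Real.sqrt c + Real.sqrt b * Real.sqrt d ≤ Real.sqrt 2 * ω := by
  have step1 : Real.sqrt a * Real.sqrt c + Real.sqrt b * Real.sqrt d ≤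
      Real.sqrt ((a + b) * (c + d)) := by
    rw [Real.le_sqrt (by positivity) (by positivity)]
    have h2 : 2 * (Real.sqrt a * Real.sqrt c * (Real.sqrt b * Real.sqrt d)) ≤ a * d + b * c := by
      have e : Real.sqrt a * Real.sqrt c * (Real.sqrt b * Real.sqrt d) =
          Real.sqrt (a * d) * Real.sqrt (b * c) := by
        rw [Real.sqrt_mul ha, Real.sqrt_mul hb]; ring
      rw [e]
      have t1 := two_mul_le_add_sq (Real.sqrt (a * d)) (Real.sqrt (b * c))
      rw [Real.sq_sqrt (mul_nonneg ha hd), Real.sq_sqrt (mul_nonneg hb hc)] at t1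
      linarith
    nlinarith [Real.sq_sqrt ha, Real.sq_sqrt hb, Real.sq_sqrt hc, Real.sq_sqrt hd]
  have hab : a + b ≤ Real.sqrt 2 * r1 := by
    have h := Real.sqrt_le_sqrt (show (a + b) ^ 2 ≤ 2 * r1 ^ 2 by
      rw [hr1sq]; nlinarith [sq_nonneg (a - b)])
    rwa [Real.sqrt_sq (by positivity), show (2 : ℝ) * r1 ^ 2 = (Real.sqrt 2 * r1) ^ 2 by
      rw [mul_pow, Real.sq_sqrt (by norm_num : (0:ℝ) ≤ 2)],
      Real.sqrt_sq (by positivity)] at h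
  have hcd : c + d ≤ Real.sqrt 2 * r2 := by
    have h := Real.sqrt_le_sqrt (show (c + d) ^ 2 ≤ 2 * r2 ^ 2 by
      rw [hr2sq]; nlinarith [sq_nonneg (c - d)])
    rwa [Real.sqrt_sq (by positivity), show (2 : ℝ) * r2 ^ 2 = (Real.sqrt 2 * r2) ^ 2 by
      rw [mul_pow, Real.sq_sqrt (by norm_num : (0:ℝ) ≤ 2)],
      Real.sqrt_sq (by positivity)] at h
  have step2 : Real.sqrt ((a + b) * (c + d)) ≤ Real.sqrt 2 * ω := by
    have h1 : (a + b) * (c + d) ≤ 2 * (ω * ω) := by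
      calc (a + b) * (c + d) ≤ (Real.sqrt 2 * r1) * (Real.sqrt 2 * r2) :=
            mul_le_mul hab hcd (by positivity) (by positivity)
        _ = Real.sqrt 2 * Real.sqrt 2 * (r1 * r2) := by ring
        _ = 2 * (r1 * r2) := by rw [Real.mul_self_sqrt (by norm_num : (0:ℝ) ≤ 2)]
        _ ≤ 2 * (ω * ω) := by
            have := mul_le_mul hr1ω hr2ω hr2n hωn
            linarith
    calc Real.sqrt ((a + b) * (c + d)) ≤ Real.sqrt (2 * (ω * ω)) := Real.sqrt_le_sqrt h1
      _ = Real.sqrt 2 * ω := by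
          rw [Real.sqrt_mul (by norm_num : (0:ℝ) ≤ 2), Real.sqrt_mul_self hωn]
  exact step1.trans step2

private lemma key_bound {X : Matrix (Fin n) (Fin n) ℂ}
    (h₁ : (reM X).PosDef) (h₂ : (imM X).PosDef)
    {x y : EuclideanSpace ℂ (Fin n)} (hx : ‖x‖ = 1) (hy : ‖y‖ = 1) :
    ‖star (y : Fin n → ℂ) ⬝ᵥ X.mulVec (x : Fin n → ℂ)‖ ≤
      Real.sqrt 2 * numRadius X := by
  set ω := numRadius X with hω
  have hωn : 0 ≤ ω := numRadius_nonneg X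
  set xv : Fin n → ℂ := (x : Fin n → ℂ)
  set yv : Fin n → ℂ := (y : Fin n → ℂ)
  set zx := star xv ⬝ᵥ X.mulVec xv with hzx
  set zy := star yv ⬝ᵥ X.mulVec yv with hzy
  set a := zx.re; set b := zx.im; set c := zy.re; set d := zy.im
  have e1 : (star xv ⬝ᵥ (reM X).mulVec xv).re = a := by rw [quad_reM, Complex.ofReal_re]
  have e2 : (star yv ⬝ᵥ (reM X).mulVec yv).re = c := by rw [quad_reM, Complex.ofReal_re]
  have e3 : (star xv ⬝ᵥ (imM X).mulVec xv).re = b := by rw [quad_imM, Complex.ofReal_re]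
  have e4 : (star yv ⬝ᵥ (imM X).mulVec yv).re = d := by rw [quad_imM, Complex.ofReal_re]
  have ha : 0 ≤ a := by
    have h := h₁.posSemidef.re_dotProduct_nonneg xv
    rwa [RCLike.re_to_complex, e1] at h
  have hb : 0 ≤ b := by
    have h := h₂.posSemidef.re_dotProduct_nonneg xv
    rwa [RCLike.re_to_complex, e3] at h
  have hc : 0 ≤ c := by
    have h := h₁.posSemidef.re_dotProduct_nonneg yv
    rwa [RCLike.re_to_complex, e2] at h
  have hd : 0 ≤ d := by
    have h := h₂.posSemidef.re_dotProduct_nonneg yv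
    rwa [RCLike.re_to_complex, e4] at h
  set r1 := ‖zx‖ with hr1
  set r2 := ‖zy‖ with hr2
  have hr1n : 0 ≤ r1 := norm_nonneg _
  have hr2n : 0 ≤ r2 := norm_nonneg _
  have hr1sq : r1 ^ 2 = a ^ 2 + b ^ 2 := by
    rw [hr1, Complex.sq_norm, Complex.normSq_apply]; ring
  have hr2sq : r2 ^ 2 = c ^ 2 + d ^ 2 := by
    rw [hr2, Complex.sq_norm, Complex.normSq_apply]; ring
  have hr1ω : r1 ≤ ω := abs_le_numRadius hx
  have hr2ω : r2 ≤ ω := abs_le_numRadius hy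
  -- decompose X
  have hX : X = reM X + Complex.I • imM X := by
    ext i j
    simp only [reM, imM, Matrix.add_apply, Matrix.smul_apply, Matrix.sub_apply, smul_eq_mul,
      conjTranspose_apply]
    have : Complex.I * Complex.I = -1 := Complex.I_mul_I
    field_simp
    linear_combination (X i j - star (X j i)) * this
  have hdec : star yv ⬝ᵥ X.mulVec xv =
      star yv ⬝ᵥ (reM X).mulVec xv + Complex.I * (star yv ⬝ᵥ (imM X).mulVec xv) := by
    conv_lhs => rw [hX]
    rw [add_mulVec, dotProduct_add, smul_mulVec, dotProduct_smul, smul_eq_mul]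
  have hcs1' : ‖star yv ⬝ᵥ (reM X).mulVec xv‖ ≤ Real.sqrt a * Real.sqrt c := by
    have h := psd_cs h₁.posSemidef xv yv
    rwa [e1, e2] at h
  have hcs2' : ‖star yv ⬝ᵥ (imM X).mulVec xv‖ ≤ Real.sqrt b * Real.sqrt d := by
    have h := psd_cs h₂.posSemidef xv yv
    rwa [e3, e4] at h
  have hsplit : ‖star yv ⬝ᵥ X.mulVec xv‖ ≤
      Real.sqrt a * Real.sqrt c + Real.sqrt b * Real.sqrt d := by
    rw [hdec]
    calc ‖star yv ⬝ᵥ (reM X).mulVec xv + Complex.I * (star yv ⬝ᵥ (imM X).mulVec xv)‖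
        ≤ ‖star yv ⬝ᵥ (reM X).mulVec xv‖
          + ‖Complex.I * (star yv ⬝ᵥ (imM X).mulVec xv)‖ := norm_add_le _ _
      _ = ‖star yv ⬝ᵥ (reM X).mulVec xv‖
          + ‖star yv ⬝ᵥ (imM X).mulVec xv‖ := by
            rw [norm_mul, Complex.norm_I, one_mul]
      _ ≤ _ := add_le_add hcs1' hcs2'
  exact hsplit.trans (scalar_ineq ha hb hc hd hr1sq hr2sq hr1n hr2n hr1ω hr2ω hωn)

private lemma opNorm_le_sqrt_two_mul {X : Matrix (Fin n) (Fin n) ℂ}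
    (h₁ : (reM X).PosDef) (h₂ : (imM X).PosDef) :
    opNorm X ≤ Real.sqrt 2 * numRadius X := by
  have hωn : 0 ≤ numRadius X := numRadius_nonneg X
  refine ContinuousLinearMap.opNorm_le_bound _ (by positivity) fun v => ?_
  rcases eq_or_ne v 0 with rfl | hv
  · simp
  have hvn : 0 < ‖v‖ := norm_pos_iff.mpr hv
  set T := Matrix.toEuclideanCLM (𝕜 := ℂ) X
  set x : EuclideanSpace ℂ (Fin n) := (‖v‖⁻¹ : ℂ) • v with hxdef
  have hx : ‖x‖ = 1 := by
    rw [hxdef, norm_smul]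
    simp [norm_inv, hvn.ne']
  have hTv : T v = (‖v‖ : ℂ) • T x := by
    have hmul : ((‖v‖ : ℂ)) * (‖v‖ : ℂ)⁻¹ = 1 :=
      mul_inv_cancel₀ (by exact_mod_cast hvn.ne')
    rw [hxdef, ContinuousLinearMap.map_smul, smul_smul, hmul, one_smul]
  have hnorm : ‖T v‖ = ‖v‖ * ‖T x‖ := by
    rw [hTv, norm_smul]
    simp
  rw [hnorm, mul_comm]
  refine mul_le_mul_of_nonneg_right ?_ (norm_nonneg v)
  -- suffices to bound ‖T x‖
  rcases eq_or_ne (T x) 0 with hTx | hTx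
  · rw [hTx]; simpa using by positivity
  have hTxn : 0 < ‖T x‖ := norm_pos_iff.mpr hTx
  set y : EuclideanSpace ℂ (Fin n) := (‖T x‖⁻¹ : ℂ) • T x with hydef
  have hy : ‖y‖ = 1 := by
    rw [hydef, norm_smul]
    simp [norm_inv, hTxn.ne']
  have hcne : (‖T x‖ : ℂ) ≠ 0 := by exact_mod_cast hTxn.ne'
  have hinner : (inner ℂ y (T x) : ℂ) = (‖T x‖ : ℝ) := by
    rw [hydef, inner_smul_left, inner_self_eq_norm_sq_to_K, map_inv₀, Complex.conj_ofReal]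
    field_simp
    rfl
  have hkb := key_bound h₁ h₂ hx hy
  rw [← inner_clm, hinner] at hkb
  rwa [Complex.norm_real, norm_norm] at hkb

end Aux

theorem numRadius_list_prod_le_of_accretiveDissipative {n m : ℕ} (hm : 0 < m)
    (X : Fin m → Matrix (Fin n) (Fin n) ℂ)
    (h₁ : ∀ j, (reM (X j)).PosDef) (h₂ : ∀ j, (imM (X j)).PosDef) :
    numRadius (List.ofFn X).prod ≤ (2 : ℝ) ^ ((m : ℝ) / 2) * ∏ j : Fin m, numRadius (X j) := by
  have hstep1 : numRadius (List.ofFn X).prod ≤ opNorm (List.ofFn X).prod :=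
    numRadius_le_opNorm _
  have hofn : List.map (Matrix.toEuclideanCLM (𝕜 := ℂ)) (List.ofFn X) =
      List.ofFn (fun j => Matrix.toEuclideanCLM (𝕜 := ℂ) (X j)) := by
    rw [List.map_ofFn]; rfl
  have hmap : Matrix.toEuclideanCLM (𝕜 := ℂ) (List.ofFn X).prod =
      (List.ofFn (fun j => Matrix.toEuclideanCLM (𝕜 := ℂ) (X j))).prod := by
    rw [← hofn]
    exact _root_.map_list_prod (Matrix.toEuclideanCLM (𝕜 := ℂ)) _
  have hne : List.ofFn (fun j => Matrix.toEuclideanCLM (𝕜 := ℂ) (X j)) ≠ [] := by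
    simp [List.ofFn_eq_nil_iff, hm.ne']
  have hstep2 : opNorm (List.ofFn X).prod ≤ ∏ j : Fin m, opNorm (X j) := by
    rw [opNorm, hmap]
    calc ‖(List.ofFn (fun j => Matrix.toEuclideanCLM (𝕜 := ℂ) (X j))).prod‖
        ≤ ((List.ofFn (fun j => Matrix.toEuclideanCLM (𝕜 := ℂ) (X j))).map norm).prod :=
          List.norm_prod_le' hne
      _ = ∏ j : Fin m, opNorm (X j) := by
          rw [← hofn, List.map_map, List.map_ofFn, List.prod_ofFn]
          rfl
  have hstep3 : ∏ j : Fin m, opNorm (X j) ≤ ∏ j : Fin m, (Real.sqrt 2 * numRadius (X j)) := by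
    refine Finset.prod_le_prod (fun j _ => norm_nonneg _) fun j _ =>
      opNorm_le_sqrt_two_mul (h₁ j) (h₂ j)
  have hstep4 : ∏ j : Fin m, (Real.sqrt 2 * numRadius (X j)) =
      (2 : ℝ) ^ ((m : ℝ) / 2) * ∏ j : Fin m, numRadius (X j) := by
    rw [Finset.prod_mul_distrib, Finset.prod_const, Finset.card_univ, Fintype.card_fin]
    congr 1
    rw [Real.sqrt_eq_rpow, ← Real.rpow_natCast ((2:ℝ) ^ ((1:ℝ)/2)) m,
      ← Real.rpow_mul (by norm_num : (0:ℝ) ≤ 2)]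
    ring_nf
  calc numRadius (List.ofFn X).prod ≤ ∏ j : Fin m, opNorm (X j) := hstep1.trans hstep2
    _ ≤ _ := hstep3
    _ = _ := hstep4
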